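/- Let ρ be a Borel measure on (0, +∞) with 0 < ∫₀^∞ (v² ∧ v) ρ(dv) < +∞ and let J_ρ(b) = ∫₀^∞ (e^{−bv} − 1 + bv) ρ(dv) for b ≥ 0. Assume there exist β > 1, γ > 1 with ln β / ln γ irrational, and η > 1, θ > 1, such that J_ρ(β·b) = η·J_ρ(b) and J_ρ(γ·b) = θ·J_ρ(b) for all b ≥ 0. Then there exist C > 0 and α ∈ (1, 2) such that J_ρ(b) = C·b^α for all b ≥ 0. -/

import Mathlib

open Real Filter Set MeasureTheory Topology

private lemma phi_nonneg (x : ℝ) : 0 ≤ Real.exp (-x) - 1 + x := by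
  have := Real.add_one_le_exp (-x); linarith

private lemma phi_pos {x : ℝ} (hx : 0 < x) : 0 < Real.exp (-x) - 1 + x := by
  have := Real.add_one_lt_exp (x := -x) (by linarith); linarith

private lemma phi_le_self {x : ℝ} (hx : 0 ≤ x) : Real.exp (-x) - 1 + x ≤ x := by
  have h : Real.exp (-x) ≤ Real.exp 0 := Real.exp_le_exp.mpr (by linarith)
  rw [Real.exp_zero] at h; linarith

private lemma exp_neg_hasDerivAt (c y : ℝ) :
    HasDerivAt (fun y : ℝ => Real.exp (-(c * y))) (-c * Real.exp (-(c * y))) y := by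
  have h : HasDerivAt (fun y : ℝ => -(c * y)) (-c) y := by
    simpa [Pi.neg_def] using ((hasDerivAt_id y).const_mul c).neg
  simpa [mul_comm, Function.comp_def] using (Real.hasDerivAt_exp (-(c * y))).comp y h

private lemma pos_of_deriv_pos {f f' : ℝ → ℝ} (hd : ∀ x, HasDerivAt f (f' x) x)
    (h0 : f 0 = 0) (hf' : ∀ x, 0 < x → 0 < f' x) {x : ℝ} (hx : 0 < x) : 0 < f x := by
  have hmono : StrictMonoOn f (Set.Ici 0) := by
    refine strictMonoOn_of_deriv_pos (convex_Ici 0)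
      (fun y _ => (hd y).continuousAt.continuousWithinAt) ?_
    intro y hy
    rw [interior_Ici] at hy
    rw [(hd y).deriv]
    exact hf' y hy
  have := hmono (Set.mem_Ici.mpr le_rfl) (Set.mem_Ici.mpr hx.le) hx
  rwa [h0] at this

private lemma phi_le_sq {x : ℝ} (hx : 0 ≤ x) : Real.exp (-x) - 1 + x ≤ x ^ 2 := by
  rcases eq_or_lt_of_le hx with rfl | hx
  · simp
  have h := pos_of_deriv_pos (f := fun y : ℝ => y ^ 2 - (Real.exp (-y) - 1 + y))
    (f' := fun y : ℝ => 2 * y - (1 - Real.exp (-y))) ?_ (by norm_num) ?_ hx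
  · linarith
  · intro y
    have h1 : HasDerivAt (fun y : ℝ => Real.exp (-y)) (-1 * Real.exp (-y)) y := by
      simpa using exp_neg_hasDerivAt 1 y
    have h2 : HasDerivAt (fun y : ℝ => y ^ 2) (2 * y) y := by
      simpa using hasDerivAt_pow 2 y
    have h3 := h2.sub ((h1.sub_const 1).add (hasDerivAt_id' (x := y)))
    simp only [Pi.sub_def, Pi.add_def] at h3
    exact h3.congr_deriv (by ring)
  · intro y hy
    have := Real.add_one_le_exp (-y)
    nlinarith

private lemma psi_pos {l x : ℝ} (hl : 1 < l) (hx : 0 < x) :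
    0 < Real.exp (-(l * x)) - l * Real.exp (-x) + l - 1 := by
  set u := Real.exp (-x) with hu
  have hu0 : 0 < u := Real.exp_pos _
  have hu1 : u < 1 := Real.exp_lt_one_iff.mpr (by linarith)
  have hb : 1 + l * (u - 1) < (1 + (u - 1)) ^ l :=
    one_add_mul_self_lt_rpow_one_add (by linarith) (by linarith) hl
  have hrw : Real.exp (-(l * x)) = u ^ l := by
    rw [hu, ← Real.exp_mul]
    ring_nf
  rw [hrw]
  have h1u : (1 + (u - 1)) = u := by ring
  rw [h1u] at hb
  linarith

private lemma phi_scale_lt {l x : ℝ} (hl : 1 < l) (hx : 0 < x) :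
    l * (Real.exp (-x) - 1 + x) < Real.exp (-(l * x)) - 1 + l * x := by
  have := psi_pos hl hx; linarith

private lemma phi_scale_gt {l x : ℝ} (hl : 1 < l) (hx : 0 < x) :
    Real.exp (-(l * x)) - 1 + l * x < l ^ 2 * (Real.exp (-x) - 1 + x) := by
  have h := pos_of_deriv_pos
    (f := fun y : ℝ => l ^ 2 * (Real.exp (-y) - 1 + y) - (Real.exp (-(l * y)) - 1 + l * y))
    (f' := fun y : ℝ => l * (Real.exp (-(l * y)) - l * Real.exp (-y) + l - 1)) ?_ (by norm_num) ?_ hx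
  · linarith
  · intro y
    have h1 : HasDerivAt (fun y : ℝ => Real.exp (-y)) (-1 * Real.exp (-y)) y := by
      simpa using exp_neg_hasDerivAt 1 y
    have h2 := exp_neg_hasDerivAt l y
    have h3 := (((h1.sub_const 1).add (hasDerivAt_id' (x := y))).const_mul (l ^ 2)).sub
      ((h2.sub_const 1).add ((hasDerivAt_id' (x := y)).const_mul l))
    simp only [Pi.sub_def, Pi.add_def] at h3
    exact h3.congr_deriv (by ring)
  · intro y hy
    have := psi_pos hl hy
    nlinarith

private lemma shift_const_zero {k : ℝ → ℝ} (hk : Continuous k) {p q c : ℝ} (hp : 0 < p)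
    (hkp : ∀ t, k (t + p) = k t) (hkq : ∀ t, k (t + q) = k t + c) : c = 0 := by
  have hper : Function.Periodic k p := hkp
  obtain ⟨M, hM⟩ : ∃ M, ∀ t, ‖k t‖ ≤ M := by
    obtain ⟨M, hM⟩ := (isCompact_Icc : IsCompact (Set.Icc 0 p)).exists_bound_of_continuousOn
      hk.continuousOn
    refine ⟨M, fun t => ?_⟩
    obtain ⟨y, hy, hty⟩ := hper.exists_mem_Ico₀ hp t
    rw [hty]; exact hM y (Set.mem_Icc_of_Ico hy)
  by_contra hc
  have hn : ∀ n : ℕ, k (n * q) = k 0 + n * c := by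
    intro n
    induction n with
    | zero => simp
    | succ n ih =>
      have h1 : ((n:ℝ) + 1) * q = (n:ℝ) * q + q := by ring
      rw [Nat.cast_succ, h1, hkq, ih]; ring
  obtain ⟨n, hnn⟩ := exists_nat_gt ((M + M) / |c|)
  have hcpos : 0 < |c| := abs_pos.mpr hc
  have key : ‖(n:ℝ) * c‖ ≤ M + M := by
    have h2 : (n:ℝ) * c = k ((n:ℝ) * q) - k 0 := by rw [hn n]; ring
    rw [h2]
    exact (norm_sub_le _ _).trans (add_le_add (hM _) (hM 0))
  rw [Real.norm_eq_abs, abs_mul, Nat.abs_cast] at key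
  have := (div_lt_iff₀ hcpos).mp hnn
  linarith

private lemma const_of_two_periods {k : ℝ → ℝ} (hk : Continuous k) {p q : ℝ}
    (hp : 0 < p) (hq : 0 < q) (hirr : Irrational (p / q))
    (hkp : ∀ t, k (t + p) = k t) (hkq : ∀ t, k (t + q) = k t) : ∀ t, k t = k 0 := by
  set P : AddSubgroup ℝ :=
    { carrier := {s | ∀ t, k (t + s) = k t}
      add_mem' := by
        intro a b ha hb t
        rw [← add_assoc, hb, ha]
      zero_mem' := by intro t; rw [add_zero]
      neg_mem' := by
        intro a ha t
        have h := ha (t + -a)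
        rw [neg_add_cancel_right] at h
        exact h.symm } with hP
  set G := AddSubgroup.closure ({p, q} : Set ℝ) with hG
  have hGP : G ≤ P := by
    rw [hG, AddSubgroup.closure_le]
    rintro s (rfl | rfl)
    · exact hkp
    · exact hkq
  have hdense : Dense (G : Set ℝ) := by
    rcases G.dense_or_cyclic with hd | ⟨a, ha⟩
    · exact hd
    · exfalso
      have hpG : p ∈ G := AddSubgroup.subset_closure (Set.mem_insert _ _)
      have hqG : q ∈ G := AddSubgroup.subset_closure (Set.mem_insert_of_mem _ rfl)
      rw [ha, AddSubgroup.mem_closure_singleton] at hpG hqG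
      obtain ⟨m, hm⟩ := hpG
      obtain ⟨n, hn⟩ := hqG
      rw [zsmul_eq_mul] at hm hn
      have ha0 : a ≠ 0 := by
        rintro rfl
        rw [mul_zero] at hn
        exact absurd hn.symm (ne_of_gt hq)
      have hn0 : (n:ℝ) ≠ 0 := by
        rintro h
        rw [h, zero_mul] at hn
        exact absurd hn.symm (ne_of_gt hq)
      apply hirr
      refine ⟨(m : ℚ) / (n : ℚ), ?_⟩
      push_cast
      rw [← hm, ← hn, mul_div_mul_right _ _ ha0]
  have heqon : Set.EqOn k (fun _ => k 0) (G : Set ℝ) := by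
    intro s hs
    have h := hGP hs 0
    rw [zero_add] at h
    exact h
  have hconst := Continuous.ext_on hdense hk continuous_const heqon
  intro t
  exact congrFun hconst t

/-- If `J_ρ` (the compensated Laplace exponent of a nonzero Lévy measure `ρ` on `(0,∞)`
with `∫ (v² ∧ v) ρ(dv) < ∞`) satisfies `J_ρ(βb) = η J_ρ(b)` and `J_ρ(γb) = θ J_ρ(b)`
for all `b ≥ 0`, with `β, γ, η, θ > 1` and `ln β / ln γ` irrational, then
`J_ρ(b) = C·b^α` for some `C > 0` and `α ∈ (1,2)`. -/
theorem stmt6 (ρ : Measure ℝ)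
    (hpos : 0 < ∫⁻ v in Set.Ioi (0:ℝ), ENNReal.ofReal (min (v ^ 2) v) ∂ρ)
    (hfin : ∫⁻ v in Set.Ioi (0:ℝ), ENNReal.ofReal (min (v ^ 2) v) ∂ρ < ⊤)
    (J : ℝ → ℝ)
    (hJ : ∀ b ≥ (0:ℝ), J b = ∫ v in Set.Ioi (0:ℝ), (Real.exp (-(b * v)) - 1 + b * v) ∂ρ)
    (β γ η θ : ℝ) (hβ : 1 < β) (hγ : 1 < γ)
    (hirr : Irrational (Real.log β / Real.log γ))
    (hη : 1 < η) (hθ : 1 < θ)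
    (heqβ : ∀ b ≥ (0:ℝ), J (β * b) = η * J b)
    (heqγ : ∀ b ≥ (0:ℝ), J (γ * b) = θ * J b) :
    ∃ C > (0:ℝ), ∃ α ∈ Set.Ioo (1:ℝ) 2, ∀ b ≥ (0:ℝ), J b = C * b ^ α := by
  have mIoi : MeasurableSet (Set.Ioi (0:ℝ)) := measurableSet_Ioi
  set ν := ρ.restrict (Set.Ioi 0) with hν
  have hm_nonneg : ∀ᵐ v ∂ν, 0 ≤ min (v ^ 2) v := by
    rw [hν, ae_restrict_iff' mIoi]
    exact ae_of_all _ fun v hv => le_min (sq_nonneg v) (le_of_lt hv)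
  have hm_int : Integrable (fun v => min (v ^ 2) v) ν :=
    ⟨((continuous_pow 2).min continuous_id).aestronglyMeasurable,
      (hasFiniteIntegral_iff_ofReal hm_nonneg).mpr hfin⟩
  -- pointwise bound
  have key_bound : ∀ b : ℝ, 0 ≤ b → ∀ v : ℝ, 0 < v →
      ‖Real.exp (-(b * v)) - 1 + b * v‖ ≤ max (b ^ 2) b * min (v ^ 2) v := by
    intro b hb v hv
    have hbv : 0 ≤ b * v := mul_nonneg hb hv.le
    rw [Real.norm_eq_abs, abs_of_nonneg (phi_nonneg _)]
    rcases le_total v 1 with h1 | h1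
    · rw [min_eq_left (by nlinarith : v ^ 2 ≤ v)]
      calc Real.exp (-(b*v)) - 1 + b*v ≤ (b*v)^2 := phi_le_sq hbv
        _ = b^2 * v^2 := by ring
        _ ≤ max (b^2) b * v^2 := by nlinarith [le_max_left (b^2) b, sq_nonneg v]
    · rw [min_eq_right (by nlinarith : v ≤ v ^ 2)]
      calc Real.exp (-(b*v)) - 1 + b*v ≤ b*v := phi_le_self hbv
        _ ≤ max (b^2) b * v := by nlinarith [le_max_right (b^2) b]
  -- integrability
  have hint : ∀ b : ℝ, 0 ≤ b → Integrable (fun v => Real.exp (-(b * v)) - 1 + b * v) ν := by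
    intro b hb
    refine Integrable.mono' (hm_int.const_mul (max (b ^ 2) b))
      (Continuous.aestronglyMeasurable (by fun_prop)) ?_
    rw [hν, ae_restrict_iff' mIoi]
    exact ae_of_all _ fun v hv => key_bound b hb v hv
  -- continuity
  have hJcont : ∀ b₀ : ℝ, 0 < b₀ → ContinuousAt J b₀ := by
    intro b₀ hb₀
    have hFcont : ContinuousAt (fun b => ∫ v, (Real.exp (-(b * v)) - 1 + b * v) ∂ν) b₀ := by
      apply continuousAt_of_dominated (bound := fun v => max ((b₀+1)^2) (b₀+1) * min (v^2) v)
      · exact Eventually.of_forall fun x => Continuous.aestronglyMeasurable (by fun_prop)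
      · have hev : ∀ᶠ x in 𝓝 b₀, x ∈ Set.Ioo 0 (b₀ + 1) := Ioo_mem_nhds hb₀ (by linarith)
        filter_upwards [hev] with x hx
        rw [hν, ae_restrict_iff' mIoi]
        refine ae_of_all _ fun v hv => (key_bound x hx.1.le v hv).trans ?_
        have hm0 : 0 ≤ min (v^2) v := le_min (sq_nonneg v) hv.le
        have hmax : max (x^2) x ≤ max ((b₀+1)^2) (b₀+1) :=
          max_le (le_max_of_le_left (by nlinarith [hx.1.le, hx.2.le]))
            (le_max_of_le_right hx.2.le)
        nlinarith
      · exact hm_int.const_mul _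
      · exact ae_of_all _ fun v =>
          (by fun_prop : Continuous fun x : ℝ => Real.exp (-(x*v)) - 1 + x*v).continuousAt
    refine hFcont.congr ?_
    filter_upwards [eventually_gt_nhds hb₀] with x hx
    exact (hJ x hx.le).symm
  -- positivity
  have hρIoi : (0:ENNReal) < ν (Set.Ioi 0) := by
    rw [hν, Measure.restrict_apply_self]
    by_contra h
    push_neg at h
    rw [setLIntegral_measure_zero _ _ (le_antisymm h zero_le)] at hpos
    exact lt_irrefl _ hpos
  have hJpos : ∀ b : ℝ, 0 < b → 0 < J b := by
    intro b hb
    rw [hJ b hb.le]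
    rw [integral_pos_iff_support_of_nonneg_ae (ae_of_all _ fun v => phi_nonneg _) (hint b hb.le)]
    refine lt_of_lt_of_le hρIoi (measure_mono fun v hv => ?_)
    exact ne_of_gt (phi_pos (mul_pos hb hv))
  -- strict comparisons
  have hstrict : ∀ l : ℝ, 1 < l → l * J 1 < J l ∧ J l < l ^ 2 * J 1 := by
    intro l hl
    have hl0 : (0:ℝ) < l := by linarith
    have hintl := hint l hl0.le
    have hint1 : Integrable (fun v => Real.exp (-v) - 1 + v) ν := by
      have := hint 1 zero_le_one; simpa using this
    have hJl : J l = ∫ v, (Real.exp (-(l * v)) - 1 + l * v) ∂ν := hJ l hl0.le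
    have hJ1' : J 1 = ∫ v, (Real.exp (-v) - 1 + v) ∂ν := by
      have := hJ 1 zero_le_one; simpa using this
    constructor
    · have h1 : 0 < ∫ v,
          ((Real.exp (-(l*v)) - 1 + l*v) - l * (Real.exp (-v) - 1 + v)) ∂ν := by
        refine (integral_pos_iff_support_of_nonneg_ae
            (f := fun v => (Real.exp (-(l*v)) - 1 + l*v) - l * (Real.exp (-v) - 1 + v))
            ?_ ?_).mpr ?_
        · filter_upwards [ae_restrict_mem mIoi] with v hv
          simp only [Pi.zero_apply]; have := phi_scale_lt hl hv; linarith
        · exact hintl.sub (hint1.const_mul l)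
        · refine lt_of_lt_of_le hρIoi (measure_mono fun v hv => ?_)
          exact ne_of_gt (by have := phi_scale_lt hl hv; simp only; linarith)
      rw [integral_sub hintl (hint1.const_mul l), integral_const_mul, ← hJl, ← hJ1'] at h1
      linarith
    · have h2 : 0 < ∫ v,
          (l ^ 2 * (Real.exp (-v) - 1 + v) - (Real.exp (-(l*v)) - 1 + l*v)) ∂ν := by
        refine (integral_pos_iff_support_of_nonneg_ae
            (f := fun v => l ^ 2 * (Real.exp (-v) - 1 + v) - (Real.exp (-(l*v)) - 1 + l*v))
            ?_ ?_).mpr ?_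
        · filter_upwards [ae_restrict_mem mIoi] with v hv
          simp only [Pi.zero_apply]; have := phi_scale_gt hl hv; linarith
        · exact (hint1.const_mul (l^2)).sub hintl
        · refine lt_of_lt_of_le hρIoi (measure_mono fun v hv => ?_)
          exact ne_of_gt (by have := phi_scale_gt hl hv; simp only; linarith)
      rw [integral_sub (hint1.const_mul (l^2)) hintl, integral_const_mul, ← hJl, ← hJ1'] at h2
      linarith
  -- symbolic part
  have hβ0 : (0:ℝ) < β := by linarith
  have hγ0 : (0:ℝ) < γ := by linarith
  have hJ1 : 0 < J 1 := hJpos 1 one_pos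
  have hJβ : J β = η * J 1 := by simpa using heqβ 1 zero_le_one
  have hηβ1 : β < η := by
    have h := (hstrict β hβ).1
    rw [hJβ] at h
    exact lt_of_mul_lt_mul_right (by linarith) hJ1.le
  have hηβ2 : η < β ^ 2 := by
    have h := (hstrict β hβ).2
    rw [hJβ] at h
    exact lt_of_mul_lt_mul_right (by linarith) hJ1.le
  set p := Real.log β with hpdef
  set q := Real.log γ with hqdef
  have hp0 : 0 < p := Real.log_pos hβ
  have hq0 : 0 < q := Real.log_pos hγ
  set α := Real.log η / p with hα
  have hα1 : 1 < α := (one_lt_div hp0).mpr (Real.log_lt_log hβ0 hηβ1)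
  have hα2 : α < 2 := by
    rw [hα, div_lt_iff₀ hp0]
    have h := Real.log_lt_log (by linarith) hηβ2
    rwa [Real.log_pow, Nat.cast_ofNat] at h
  have hαp : α * p = Real.log η := div_mul_cancel₀ _ hp0.ne'
  set g : ℝ → ℝ := fun t => Real.log (J (Real.exp t)) with hg
  have hgcont : Continuous g := by
    rw [continuous_iff_continuousAt]
    intro t
    exact ((Real.continuousAt_log (hJpos _ (Real.exp_pos t)).ne').comp
      (hJcont _ (Real.exp_pos t))).comp Real.continuous_exp.continuousAt
  have hgb : ∀ t, g (t + p) = g t + Real.log η := by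
    intro t
    have h1 : Real.exp (t + p) = β * Real.exp t := by
      rw [Real.exp_add, Real.exp_log hβ0]; ring
    simp only [hg]
    rw [h1, heqβ _ (Real.exp_pos t).le,
      Real.log_mul (by linarith : η ≠ 0) (hJpos _ (Real.exp_pos t)).ne']
    ring
  have hgc : ∀ t, g (t + q) = g t + Real.log θ := by
    intro t
    have h1 : Real.exp (t + q) = γ * Real.exp t := by
      rw [Real.exp_add, Real.exp_log hγ0]; ring
    simp only [hg]
    rw [h1, heqγ _ (Real.exp_pos t).le,
      Real.log_mul (by linarith : θ ≠ 0) (hJpos _ (Real.exp_pos t)).ne']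
    ring
  set k : ℝ → ℝ := fun t => g t - α * t with hk
  have hkcont : Continuous k := hgcont.sub (continuous_const.mul continuous_id)
  have hkp : ∀ t, k (t + p) = k t := by
    intro t
    simp only [hk]
    rw [hgb t]
    have h2 : α * (t + p) = α * t + Real.log η := by rw [mul_add, hαp]
    rw [h2]; ring
  have hkq : ∀ t, k (t + q) = k t + (Real.log θ - α * q) := by
    intro t
    simp only [hk]
    rw [hgc t]; ring
  have hc0 : Real.log θ - α * q = 0 := shift_const_zero hkcont hp0 hkp hkq
  have hkq' : ∀ t, k (t + q) = k t := by
    intro t; rw [hkq t, hc0, add_zero]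
  have hkconst := const_of_two_periods hkcont hp0 hq0 hirr hkp hkq'
  have hg0 : g 0 = Real.log (J 1) := by simp [hg]
  refine ⟨J 1, hJ1, α, ⟨hα1, hα2⟩, ?_⟩
  intro b hb
  rcases eq_or_lt_of_le hb with rfl | hb0
  · have h0 : J 0 = 0 := by
      have h := heqβ 0 le_rfl
      rw [mul_zero] at h
      nlinarith
    rw [h0, Real.zero_rpow (by linarith : α ≠ 0), mul_zero]
  · have ht := hkconst (Real.log b)
    simp only [hk, mul_zero, sub_zero] at ht
    have hgt : g (Real.log b) = Real.log (J b) := by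
      simp only [hg]
      rw [Real.exp_log hb0]
    rw [hgt, hg0] at ht
    have hlog : Real.log (J b) = Real.log (J 1) + α * Real.log b := by linarith
    calc J b = Real.exp (Real.log (J b)) := (Real.exp_log (hJpos b hb0)).symm
      _ = Real.exp (Real.log (J 1) + α * Real.log b) := by rw [hlog]
      _ = J 1 * Real.exp (Real.log b * α) := by
          rw [Real.exp_add, Real.exp_log hJ1, mul_comm α]
      _ = J 1 * b ^ α := by rw [← Real.rpow_def_of_pos hb0]
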